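/- Let f be a probability density on (0,∞), and for each s > 0 let h₁(·|s) and h₂(·|s) be probability densities on ℝ, jointly measurable in (x, s). Let (X, Y, S) be an ℝ × ℝ × (0,∞)-valued random vector whose law has density (x, y, s) ↦ h₂(x|s)·h₁(y|s)·f(s) with respect to Lebesgue measure. Let û : ℝ × (0,∞) → ℝ be measurable, set U = û(X, S) and Ũ = û(Y, S), and assume P(U = Ũ) = 0. Then for every Borel set E ⊆ ℝ: | P(U > Ũ, min(U, Ũ) ∈ E) − (1/2)·P(min(U, Ũ) ∈ E) | ≤ 2 ∫_0^∞ ∫_ℝ |h₁(x|s) − h₂(x|s)| dx · f(s) ds. -/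

import Mathlib

open MeasureTheory
open scoped ENNReal

private lemma tonelli3 (F : ℝ × ℝ × ℝ → ℝ≥0∞) (hF : Measurable F) :
    ∫⁻ p, F p = ∫⁻ s, ∫⁻ y, ∫⁻ x, F (x, y, s) := by
  rw [Measure.volume_eq_prod, lintegral_prod_symm' _ hF, Measure.volume_eq_prod,
    lintegral_prod_symm' _ hF.lintegral_prod_left']

private lemma swap3 (F : ℝ × ℝ × ℝ → ℝ≥0∞) (hF : Measurable F) :
    ∫⁻ p, F p = ∫⁻ p : ℝ × ℝ × ℝ, F (p.2.1, p.1, p.2.2) := by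
  have hF' : Measurable fun p : ℝ × ℝ × ℝ => F (p.2.1, p.1, p.2.2) :=
    hF.comp (measurable_snd.fst.prodMk (measurable_fst.prodMk measurable_snd.snd))
  rw [tonelli3 F hF, tonelli3 _ hF']
  refine lintegral_congr fun s => ?_
  have hk : AEMeasurable (Function.uncurry fun a b => F (a, b, s))
      ((volume : Measure ℝ).prod volume) :=
    (hF.comp (measurable_fst.prodMk (measurable_snd.prodMk measurable_const))).aemeasurable
  exact (lintegral_lintegral_swap hk).symm

/-- if `(X, Y, S)` has density `h₂(x|s)·h₁(y|s)·f(s)` (true calibration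
density `h₁`, estimated observation density `h₂`), `U = û(X, S)`, `Ũ = û(Y, S)` and
`P(U = Ũ) = 0`, then for every Borel `E`,
`|P(U > Ũ, min(U,Ũ) ∈ E) − (1/2)·P(min(U,Ũ) ∈ E)| ≤ 2·∫∫ |h₁ − h₂| dx · f(s) ds`. -/
theorem stmt9 {Ω : Type*} [MeasurableSpace Ω] (P : Measure Ω) [IsProbabilityMeasure P]
    (h₁ h₂ : ℝ → ℝ → ℝ) (f : ℝ → ℝ)
    (hm1 : Measurable (Function.uncurry h₁)) (hm2 : Measurable (Function.uncurry h₂))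
    (hmf : Measurable f)
    (h1nn : ∀ x s, 0 ≤ h₁ x s) (h2nn : ∀ x s, 0 ≤ h₂ x s) (hfnn : ∀ s, 0 ≤ f s)
    (h1dens : ∀ s, 0 < s → ∫⁻ x, ENNReal.ofReal (h₁ x s) = 1)
    (h2dens : ∀ s, 0 < s → ∫⁻ x, ENNReal.ofReal (h₂ x s) = 1)
    (hfsupp : ∀ s ≤ (0 : ℝ), f s = 0)
    (hfdens : ∫⁻ s in Set.Ioi (0 : ℝ), ENNReal.ofReal (f s) = 1)
    (X Y S : Ω → ℝ) (hX : Measurable X) (hY : Measurable Y) (hS : Measurable S)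
    (hlaw : Measure.map (fun ω => (X ω, Y ω, S ω)) P =
      (volume : Measure (ℝ × ℝ × ℝ)).withDensity
        (fun p => ENNReal.ofReal (h₂ p.1 p.2.2 * h₁ p.2.1 p.2.2 * f p.2.2)))
    (uhat : ℝ → ℝ → ℝ) (huhat : Measurable (Function.uncurry uhat))
    (hnotie : P {ω | uhat (X ω) (S ω) = uhat (Y ω) (S ω)} = 0)
    (E : Set ℝ) (hE : MeasurableSet E) :
    ENNReal.ofReal
        |(P {ω | uhat (Y ω) (S ω) < uhat (X ω) (S ω) ∧
              min (uhat (X ω) (S ω)) (uhat (Y ω) (S ω)) ∈ E}).toReal -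
          (1 / 2) * (P {ω | min (uhat (X ω) (S ω)) (uhat (Y ω) (S ω)) ∈ E}).toReal|
      ≤ 2 * ∫⁻ s in Set.Ioi (0 : ℝ),
            (∫⁻ x, ENNReal.ofReal |h₁ x s - h₂ x s|) * ENNReal.ofReal (f s) := by
  classical
  -- notation
  set g : ℝ × ℝ × ℝ → ℝ≥0∞ :=
    fun p => ENNReal.ofReal (h₂ p.1 p.2.2 * h₁ p.2.1 p.2.2 * f p.2.2) with hgdef
  set K : ℝ≥0∞ := 2 * ∫⁻ s in Set.Ioi (0 : ℝ),
      (∫⁻ x, ENNReal.ofReal |h₁ x s - h₂ x s|) * ENNReal.ofReal (f s) with hKdef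
  -- measurable component functions
  have hg2 : Measurable fun p : ℝ × ℝ × ℝ => h₂ p.1 p.2.2 :=
    hm2.comp (measurable_fst.prodMk measurable_snd.snd)
  have hg2' : Measurable fun p : ℝ × ℝ × ℝ => h₂ p.2.1 p.2.2 :=
    hm2.comp (measurable_snd.fst.prodMk measurable_snd.snd)
  have hg1 : Measurable fun p : ℝ × ℝ × ℝ => h₁ p.2.1 p.2.2 :=
    hm1.comp (measurable_snd.fst.prodMk measurable_snd.snd)
  have hg1' : Measurable fun p : ℝ × ℝ × ℝ => h₁ p.1 p.2.2 :=
    hm1.comp (measurable_fst.prodMk measurable_snd.snd)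
  have hgf : Measurable fun p : ℝ × ℝ × ℝ => f p.2.2 := hmf.comp measurable_snd.snd
  have hg : Measurable g := ENNReal.measurable_ofReal.comp ((hg2.mul hg1).mul hgf)
  have hu : Measurable fun p : ℝ × ℝ × ℝ => uhat p.1 p.2.2 :=
    huhat.comp (measurable_fst.prodMk measurable_snd.snd)
  have hv : Measurable fun p : ℝ × ℝ × ℝ => uhat p.2.1 p.2.2 :=
    huhat.comp (measurable_snd.fst.prodMk measurable_snd.snd)
  -- the sets
  set SA : Set (ℝ × ℝ × ℝ) := {p | uhat p.2.1 p.2.2 < uhat p.1 p.2.2 ∧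
      min (uhat p.1 p.2.2) (uhat p.2.1 p.2.2) ∈ E} with hSAdef
  set SB : Set (ℝ × ℝ × ℝ) := {p | uhat p.1 p.2.2 < uhat p.2.1 p.2.2 ∧
      min (uhat p.1 p.2.2) (uhat p.2.1 p.2.2) ∈ E} with hSBdef
  set SM : Set (ℝ × ℝ × ℝ) := {p | min (uhat p.1 p.2.2) (uhat p.2.1 p.2.2) ∈ E} with hSMdef
  set ST : Set (ℝ × ℝ × ℝ) := {p | uhat p.1 p.2.2 = uhat p.2.1 p.2.2} with hSTdef
  have hSM : MeasurableSet SM := (hu.min hv) hE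
  have hSA : MeasurableSet SA := (measurableSet_lt hv hu).inter hSM
  have hSB : MeasurableSet SB := (measurableSet_lt hu hv).inter hSM
  have hST : MeasurableSet ST := measurableSet_eq_fun hu hv
  have hT : Measurable fun ω => (X ω, Y ω, S ω) := hX.prodMk (hY.prodMk hS)
  have hmap : ∀ s : Set (ℝ × ℝ × ℝ), MeasurableSet s →
      P ((fun ω => (X ω, Y ω, S ω)) ⁻¹' s) = (volume.withDensity g) s := by
    intro s hs
    rw [← Measure.map_apply hT hs, hlaw]
  -- the three measures
  set A : ℝ≥0∞ := (volume.withDensity g) SA with hAdef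
  set b : ℝ≥0∞ := (volume.withDensity g) SB with hbdef
  have hPA : P {ω | uhat (Y ω) (S ω) < uhat (X ω) (S ω) ∧
      min (uhat (X ω) (S ω)) (uhat (Y ω) (S ω)) ∈ E} = A := hmap SA hSA
  have hPM : P {ω | min (uhat (X ω) (S ω)) (uhat (Y ω) (S ω)) ∈ E}
      = (volume.withDensity g) SM := hmap SM hSM
  have hT0 : (volume.withDensity g) ST = 0 := by rw [← hmap ST hST]; exact hnotie
  -- SM splits as SA ∪ SB up to the null tie set
  have hMsplit : (volume.withDensity g) SM = A + b := by
    have hsub : SM ⊆ SA ∪ SB ∪ ST := by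
      intro p hp
      rcases lt_trichotomy (uhat p.1 p.2.2) (uhat p.2.1 p.2.2) with h | h | h
      · exact Or.inl (Or.inr ⟨h, hp⟩)
      · exact Or.inr h
      · exact Or.inl (Or.inl ⟨h, hp⟩)
    have h1 : (volume.withDensity g) SM ≤ (volume.withDensity g) (SA ∪ SB) := by
      calc (volume.withDensity g) SM ≤ (volume.withDensity g) (SA ∪ SB ∪ ST) :=
            measure_mono hsub
        _ ≤ (volume.withDensity g) (SA ∪ SB) + (volume.withDensity g) ST :=
            measure_union_le _ _
        _ = (volume.withDensity g) (SA ∪ SB) := by rw [hT0, add_zero]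
    have h2 : (volume.withDensity g) (SA ∪ SB) ≤ (volume.withDensity g) SM :=
      measure_mono (Set.union_subset (fun p hp => hp.2) (fun p hp => hp.2))
    have hdisj : Disjoint SA SB :=
      Set.disjoint_left.mpr fun p hp hp' => absurd hp'.1 (not_lt.mpr hp.1.le)
    rw [le_antisymm h1 h2, measure_union hdisj hSB]
  -- express A and b as integrals of indicators
  have hAint : A = ∫⁻ p, SA.indicator g p := by
    rw [hAdef, withDensity_apply _ hSA, lintegral_indicator hSA]
  have hbint : b = ∫⁻ p, SB.indicator g p := by
    rw [hbdef, withDensity_apply _ hSB, lintegral_indicator hSB]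
  -- the swapped density
  set g' : ℝ × ℝ × ℝ → ℝ≥0∞ :=
    fun p => ENNReal.ofReal (h₂ p.2.1 p.2.2 * h₁ p.1 p.2.2 * f p.2.2) with hg'def
  have hgm' : Measurable g' := ENNReal.measurable_ofReal.comp ((hg2'.mul hg1').mul hgf)
  have hbswap : b = ∫⁻ p, SA.indicator g' p := by
    rw [hbint, swap3 _ (hg.indicator hSB)]
    refine lintegral_congr fun p => ?_
    by_cases hp : p ∈ SA
    · rw [Set.indicator_of_mem hp, Set.indicator_of_mem]
      exact ⟨hp.1, by rw [min_comm]; exact hp.2⟩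
    · rw [Set.indicator_of_notMem hp, Set.indicator_of_notMem]
      intro h
      exact hp ⟨h.1, by rw [min_comm]; exact h.2⟩
  -- the error terms
  set Err : ℝ × ℝ × ℝ → ℝ≥0∞ := fun p => ENNReal.ofReal
      (|h₂ p.1 p.2.2 * h₁ p.2.1 p.2.2 - h₂ p.2.1 p.2.2 * h₁ p.1 p.2.2| * f p.2.2) with hErrdef
  have hErrm : Measurable Err :=
    ENNReal.measurable_ofReal.comp (((hg2.mul hg1).sub (hg2'.mul hg1')).abs.mul hgf)
  set R : ℝ≥0∞ := ∫⁻ p, Err p with hRdef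
  -- pointwise comparisons
  have hpt : ∀ p, SA.indicator g p ≤ SA.indicator g' p + Err p := by
    intro p
    by_cases hp : p ∈ SA
    · rw [Set.indicator_of_mem hp, Set.indicator_of_mem hp]
      have h1 : h₂ p.1 p.2.2 * h₁ p.2.1 p.2.2 * f p.2.2 ≤
          h₂ p.2.1 p.2.2 * h₁ p.1 p.2.2 * f p.2.2 +
          |h₂ p.1 p.2.2 * h₁ p.2.1 p.2.2 - h₂ p.2.1 p.2.2 * h₁ p.1 p.2.2| * f p.2.2 := by
        have := hfnn p.2.2
        nlinarith [le_abs_self (h₂ p.1 p.2.2 * h₁ p.2.1 p.2.2 - h₂ p.2.1 p.2.2 * h₁ p.1 p.2.2)]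
      exact le_trans (ENNReal.ofReal_le_ofReal h1) (ENNReal.ofReal_add_le)
    · rw [Set.indicator_of_notMem hp, Set.indicator_of_notMem hp]
      exact zero_le
  have hpt' : ∀ p, SA.indicator g' p ≤ SA.indicator g p + Err p := by
    intro p
    by_cases hp : p ∈ SA
    · rw [Set.indicator_of_mem hp, Set.indicator_of_mem hp]
      have h1 : h₂ p.2.1 p.2.2 * h₁ p.1 p.2.2 * f p.2.2 ≤
          h₂ p.1 p.2.2 * h₁ p.2.1 p.2.2 * f p.2.2 +
          |h₂ p.1 p.2.2 * h₁ p.2.1 p.2.2 - h₂ p.2.1 p.2.2 * h₁ p.1 p.2.2| * f p.2.2 := by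
        have := hfnn p.2.2
        nlinarith [neg_abs_le (h₂ p.1 p.2.2 * h₁ p.2.1 p.2.2 - h₂ p.2.1 p.2.2 * h₁ p.1 p.2.2)]
      exact le_trans (ENNReal.ofReal_le_ofReal h1) (ENNReal.ofReal_add_le)
    · rw [Set.indicator_of_notMem hp, Set.indicator_of_notMem hp]
      exact zero_le
  have hAb : A ≤ b + R := by
    rw [hAint, hbswap, hRdef, ← lintegral_add_left (hgm'.indicator hSA)]
    exact lintegral_mono hpt
  have hbA : b ≤ A + R := by
    rw [hAint, hbswap, hRdef, ← lintegral_add_left (hg.indicator hSA)]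
    exact lintegral_mono hpt'
  -- bound R by K
  have hRK : R ≤ K := by
    set Err1 : ℝ × ℝ × ℝ → ℝ≥0∞ := fun p =>
      ENNReal.ofReal (|h₁ p.1 p.2.2 - h₂ p.1 p.2.2| * h₁ p.2.1 p.2.2 * f p.2.2) with hE1def
    set Err2 : ℝ × ℝ × ℝ → ℝ≥0∞ := fun p =>
      ENNReal.ofReal (h₁ p.1 p.2.2 * |h₁ p.2.1 p.2.2 - h₂ p.2.1 p.2.2| * f p.2.2) with hE2def
    have hE1m : Measurable Err1 :=
      ENNReal.measurable_ofReal.comp (((hg1'.sub hg2).abs.mul hg1).mul hgf)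
    have hE2m : Measurable Err2 :=
      ENNReal.measurable_ofReal.comp ((hg1'.mul (hg1.sub hg2').abs).mul hgf)
    have hptE : ∀ p, Err p ≤ Err1 p + Err2 p := by
      intro p
      refine le_trans (ENNReal.ofReal_le_ofReal ?_) ENNReal.ofReal_add_le
      have key : |h₂ p.1 p.2.2 * h₁ p.2.1 p.2.2 - h₂ p.2.1 p.2.2 * h₁ p.1 p.2.2| ≤
          |h₁ p.1 p.2.2 - h₂ p.1 p.2.2| * h₁ p.2.1 p.2.2 +
          h₁ p.1 p.2.2 * |h₁ p.2.1 p.2.2 - h₂ p.2.1 p.2.2| := by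
        have heq : h₂ p.1 p.2.2 * h₁ p.2.1 p.2.2 - h₂ p.2.1 p.2.2 * h₁ p.1 p.2.2 =
            (h₂ p.1 p.2.2 - h₁ p.1 p.2.2) * h₁ p.2.1 p.2.2 +
            h₁ p.1 p.2.2 * (h₁ p.2.1 p.2.2 - h₂ p.2.1 p.2.2) := by ring
        rw [heq]
        refine le_trans (abs_add_le _ _) ?_
        rw [abs_mul, abs_mul, abs_of_nonneg (h1nn _ _), abs_of_nonneg (h1nn _ _),
          abs_sub_comm (h₂ p.1 p.2.2)]
      have := hfnn p.2.2
      nlinarith [abs_nonneg (h₂ p.1 p.2.2 * h₁ p.2.1 p.2.2 - h₂ p.2.1 p.2.2 * h₁ p.1 p.2.2)]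
    have hI1 : (∫⁻ p, Err1 p) = ∫⁻ s in Set.Ioi (0 : ℝ),
        (∫⁻ x, ENNReal.ofReal |h₁ x s - h₂ x s|) * ENNReal.ofReal (f s) := by
      rw [tonelli3 _ hE1m]
      have hiter : ∀ s : ℝ, (∫⁻ (y : ℝ), ∫⁻ (x : ℝ), Err1 (x, y, s)) =
          (∫⁻ x, ENNReal.ofReal |h₁ x s - h₂ x s|) *
            ((∫⁻ y, ENNReal.ofReal (h₁ y s)) * ENNReal.ofReal (f s)) := by
        intro s
        have hxm : Measurable fun x : ℝ => ENNReal.ofReal |h₁ x s - h₂ x s| :=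
          ENNReal.measurable_ofReal.comp
            (((hm1.comp (measurable_id.prodMk measurable_const)).sub
              (hm2.comp (measurable_id.prodMk measurable_const))).abs)
        have hinner : ∀ y : ℝ, (∫⁻ x, Err1 (x, y, s)) =
            (∫⁻ x, ENNReal.ofReal |h₁ x s - h₂ x s|) *
              (ENNReal.ofReal (h₁ y s) * ENNReal.ofReal (f s)) := by
          intro y
          have : ∀ x : ℝ, Err1 (x, y, s) = ENNReal.ofReal |h₁ x s - h₂ x s| *
              (ENNReal.ofReal (h₁ y s) * ENNReal.ofReal (f s)) := by
            intro x
            rw [hE1def]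
            simp only
            rw [ENNReal.ofReal_mul (mul_nonneg (abs_nonneg _) (h1nn _ _)),
              ENNReal.ofReal_mul (abs_nonneg _), mul_assoc]
          rw [lintegral_congr this]
          exact lintegral_mul_const _ hxm
        rw [lintegral_congr hinner]
        have hym : Measurable fun y : ℝ => ENNReal.ofReal (h₁ y s) * ENNReal.ofReal (f s) :=
          (ENNReal.measurable_ofReal.comp
            (hm1.comp (measurable_id.prodMk measurable_const))).mul measurable_const
        rw [lintegral_const_mul _ hym]
        congr 1
        exact lintegral_mul_const _ (ENNReal.measurable_ofReal.comp
          (hm1.comp (measurable_id.prodMk measurable_const)))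
      rw [lintegral_congr hiter]
      have hind : (fun s : ℝ => (∫⁻ x, ENNReal.ofReal |h₁ x s - h₂ x s|) *
          ((∫⁻ y, ENNReal.ofReal (h₁ y s)) * ENNReal.ofReal (f s))) =
          (Set.Ioi (0 : ℝ)).indicator (fun s =>
            (∫⁻ x, ENNReal.ofReal |h₁ x s - h₂ x s|) * ENNReal.ofReal (f s)) := by
        funext s
        by_cases hs : 0 < s
        · rw [Set.indicator_of_mem (Set.mem_Ioi.mpr hs), h1dens s hs, one_mul]
        · rw [Set.indicator_of_notMem (by simpa using hs), hfsupp s (not_lt.1 hs)]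
          simp
      rw [hind, lintegral_indicator measurableSet_Ioi]
    have hI2 : (∫⁻ p, Err2 p) = ∫⁻ s in Set.Ioi (0 : ℝ),
        (∫⁻ x, ENNReal.ofReal |h₁ x s - h₂ x s|) * ENNReal.ofReal (f s) := by
      rw [tonelli3 _ hE2m]
      have hiter : ∀ s : ℝ, (∫⁻ (y : ℝ), ∫⁻ (x : ℝ), Err2 (x, y, s)) =
          (∫⁻ x, ENNReal.ofReal (h₁ x s)) *
            ((∫⁻ y, ENNReal.ofReal |h₁ y s - h₂ y s|) * ENNReal.ofReal (f s)) := by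
        intro s
        have hxm : Measurable fun x : ℝ => ENNReal.ofReal (h₁ x s) :=
          ENNReal.measurable_ofReal.comp (hm1.comp (measurable_id.prodMk measurable_const))
        have hinner : ∀ y : ℝ, (∫⁻ x, Err2 (x, y, s)) =
            (∫⁻ x, ENNReal.ofReal (h₁ x s)) *
              (ENNReal.ofReal |h₁ y s - h₂ y s| * ENNReal.ofReal (f s)) := by
          intro y
          have : ∀ x : ℝ, Err2 (x, y, s) = ENNReal.ofReal (h₁ x s) *
              (ENNReal.ofReal |h₁ y s - h₂ y s| * ENNReal.ofReal (f s)) := by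
            intro x
            rw [hE2def]
            simp only
            rw [ENNReal.ofReal_mul (mul_nonneg (h1nn _ _) (abs_nonneg _)),
              ENNReal.ofReal_mul (h1nn _ _), mul_assoc]
          rw [lintegral_congr this]
          exact lintegral_mul_const _ hxm
        rw [lintegral_congr hinner]
        have hym : Measurable fun y : ℝ =>
            ENNReal.ofReal |h₁ y s - h₂ y s| * ENNReal.ofReal (f s) :=
          (ENNReal.measurable_ofReal.comp
            (((hm1.comp (measurable_id.prodMk measurable_const)).sub
              (hm2.comp (measurable_id.prodMk measurable_const))).abs)).mul measurable_const
        rw [lintegral_const_mul _ hym]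
        congr 1
        exact lintegral_mul_const _ (ENNReal.measurable_ofReal.comp
          (((hm1.comp (measurable_id.prodMk measurable_const)).sub
            (hm2.comp (measurable_id.prodMk measurable_const))).abs))
      rw [lintegral_congr hiter]
      have hind : (fun s : ℝ => (∫⁻ x, ENNReal.ofReal (h₁ x s)) *
          ((∫⁻ y, ENNReal.ofReal |h₁ y s - h₂ y s|) * ENNReal.ofReal (f s))) =
          (Set.Ioi (0 : ℝ)).indicator (fun s =>
            (∫⁻ x, ENNReal.ofReal |h₁ x s - h₂ x s|) * ENNReal.ofReal (f s)) := by
        funext s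
        by_cases hs : 0 < s
        · rw [Set.indicator_of_mem (Set.mem_Ioi.mpr hs), h1dens s hs, one_mul]
        · rw [Set.indicator_of_notMem (by simpa using hs), hfsupp s (not_lt.1 hs)]
          simp
      rw [hind, lintegral_indicator measurableSet_Ioi]
    calc R ≤ ∫⁻ p, Err1 p + Err2 p := lintegral_mono hptE
      _ = (∫⁻ p, Err1 p) + ∫⁻ p, Err2 p := lintegral_add_left hE1m _
      _ = K := by rw [hI1, hI2, hKdef, two_mul]
  -- finish: pass to real numbers
  rw [hPA, hPM, hMsplit]
  by_cases hKtop : K = ⊤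
  · rw [hKtop]; exact le_top
  have hAne : A ≠ ⊤ := by
    rw [← hPA]; exact (measure_lt_top P _).ne
  have hbne : b ≠ ⊤ := by
    have : b ≤ (volume.withDensity g) SM := hMsplit ▸ le_add_self
    rw [← hPM] at this
    exact (this.trans_lt (measure_lt_top P _)).ne
  have hAK : A ≤ b + K := hAb.trans (add_le_add_right hRK b)
  have hbK : b ≤ A + K := hbA.trans (add_le_add_right hRK A)
  have hA' : A.toReal ≤ b.toReal + K.toReal := by
    have := ENNReal.toReal_mono (by finiteness) hAK
    rwa [ENNReal.toReal_add hbne hKtop] at this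
  have hb' : b.toReal ≤ A.toReal + K.toReal := by
    have := ENNReal.toReal_mono (by finiteness) hbK
    rwa [ENNReal.toReal_add hAne hKtop] at this
  have habs : |A.toReal - b.toReal| ≤ K.toReal := abs_sub_le_iff.mpr ⟨by linarith, by linarith⟩
  have hKnn : 0 ≤ K.toReal := ENNReal.toReal_nonneg
  calc ENNReal.ofReal |A.toReal - 1 / 2 * (A + b).toReal| ≤ ENNReal.ofReal K.toReal := by
        apply ENNReal.ofReal_le_ofReal
        rw [ENNReal.toReal_add hAne hbne]
        rw [abs_le]
        constructor <;> [nlinarith [abs_le.mp habs]; nlinarith [abs_le.mp habs]]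
    _ ≤ K := ENNReal.ofReal_toReal_le
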